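/- If a Lie subalgebra g of spo_N(R) contains W_{ii} for all i ∈ {1,…,N} and W_{i,i+1} for all i ∈ {1,…,N-1}, then g = spo_N(R). -/

import Mathlib

open Matrix

attribute [local instance 100] LieRing.ofAssociativeRing

noncomputable section

/-- The operator `M ↦ Mˢ`, `(Mˢ)_{ij} = (-1)^{i-j+1} M_{ji}`. -/
def sOp (N : ℕ) (M : Matrix (Fin N) (Fin N) ℝ) : Matrix (Fin N) (Fin N) ℝ :=
  Matrix.of fun i j => (-1 : ℝ) ^ (((i : ℕ) : ℤ) - ((j : ℕ) : ℤ) + 1) * M j i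

/-- The Lie algebra `spo_N(ℝ) = {[[A,B],[Bˢ,-Aᵀ]] : Aˢ = A, Bᵀ = B}`, as a set of matrices. -/
def spoSet (N : ℕ) : Set (Matrix (Fin N ⊕ Fin N) (Fin N ⊕ Fin N) ℝ) :=
  {X | ∃ A B : Matrix (Fin N) (Fin N) ℝ, sOp N A = A ∧ Bᵀ = B ∧
    X = Matrix.fromBlocks A B (sOp N B) (-Aᵀ)}

/-- `W_{ij} = [[0, E_{ij}+E_{ji}], [(-1)^{i-j+1}(E_{ij}+E_{ji}), 0]]`. -/
def Wmat (N : ℕ) (i j : Fin N) : Matrix (Fin N ⊕ Fin N) (Fin N ⊕ Fin N) ℝ :=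
  Matrix.fromBlocks 0
    (Matrix.single i j 1 + Matrix.single j i 1)
    (((-1 : ℝ) ^ (((i : ℕ) : ℤ) - ((j : ℕ) : ℤ) + 1)) •
      (Matrix.single i j 1 + Matrix.single j i 1))
    0

namespace Stmt7Aux

variable {N : ℕ}

/-- sign -/
def eps (i j : Fin N) : ℝ := (-1 : ℝ) ^ (((i : ℕ) : ℤ) - ((j : ℕ) : ℤ) + 1)

lemma eps_mul_self (i j : Fin N) : eps i j * eps i j = 1 := by
  rw [eps, ← mul_zpow]
  norm_num

lemma eps_comm (i j : Fin N) : eps i j = eps j i := by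
  have h1 : eps i j * eps j i = 1 := by
    rw [eps, eps, ← zpow_add₀ (by norm_num : (-1:ℝ) ≠ 0)]
    have : (((i : ℕ) : ℤ) - ((j : ℕ) : ℤ) + 1) + (((j : ℕ) : ℤ) - ((i : ℕ) : ℤ) + 1) = 2 := by ring
    rw [this]; norm_num
  have h2 := eps_mul_self j i
  calc eps i j = eps i j * (eps j i * eps j i) := by rw [h2, mul_one]
    _ = (eps i j * eps j i) * eps j i := by ring
    _ = eps j i := by rw [h1, one_mul]

lemma eps_self (i : Fin N) : eps i i = -1 := by
  rw [eps, sub_self, zero_add, zpow_one]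

lemma eps_succ {i j : Fin N} (h : (j : ℕ) = (i : ℕ) + 1) : eps i j = 1 := by
  rw [eps]
  have : (((i : ℕ) : ℤ) - ((j : ℕ) : ℤ) + 1) = 0 := by omega
  rw [this, zpow_zero]

lemma eps_trans {i k j : Fin N} : eps i k * eps k j = -eps i j := by
  rw [eps, eps, eps, ← zpow_add₀ (by norm_num : (-1:ℝ) ≠ 0)]
  have : (((i : ℕ) : ℤ) - ((k : ℕ) : ℤ) + 1) + (((k : ℕ) : ℤ) - ((j : ℕ) : ℤ) + 1)
      = (((i : ℕ) : ℤ) - ((j : ℕ) : ℤ) + 1) + 1 := by ring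
  rw [this, zpow_add₀ (by norm_num : (-1:ℝ) ≠ 0), zpow_one]
  ring

/-- E basis -/
def E (i j : Fin N) : Matrix (Fin N) (Fin N) ℝ := Matrix.single i j 1

/-- symmetric basis -/
def S (i j : Fin N) : Matrix (Fin N) (Fin N) ℝ := E i j + E j i

/-- `A`-type basis -/
def Am (i j : Fin N) : Matrix (Fin N) (Fin N) ℝ := E i j + eps i j • E j i

def Vmat (N : ℕ) (i j : Fin N) : Matrix (Fin N ⊕ Fin N) (Fin N ⊕ Fin N) ℝ :=
  Matrix.fromBlocks (Am i j) 0 0 (-(Am i j)ᵀ)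

lemma Wmat_eq (i j : Fin N) : Wmat N i j = Matrix.fromBlocks 0 (S i j) (eps i j • S i j) 0 := rfl

lemma E_mul_same (i j k : Fin N) : E i j * E j k = E i k := by
  simp [E, Matrix.single_mul_single_same]

lemma E_mul_ne {j k : Fin N} (h : j ≠ k) (i l : Fin N) : E i j * E k l = 0 := by
  exact Matrix.single_mul_single_of_ne (c := (1:ℝ)) i j k h (1:ℝ)

lemma E_transpose (i j : Fin N) : (E i j)ᵀ = E j i := by
  ext a b
  simp [E, Matrix.single, Matrix.transpose_apply, and_comm]

end Stmt7Aux

namespace Stmt7Aux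

variable {N : ℕ}

lemma Am_transpose (i j : Fin N) : (Am i j)ᵀ = E j i + eps i j • E i j := by
  rw [Am, Matrix.transpose_add, Matrix.transpose_smul, E_transpose, E_transpose]

lemma fromBlocks_sub' (A B C D A' B' C' D' : Matrix (Fin N) (Fin N) ℝ) :
    Matrix.fromBlocks A B C D - Matrix.fromBlocks A' B' C' D' =
      Matrix.fromBlocks (A - A') (B - B') (C - C') (D - D') := by
  simp only [sub_eq_add_neg, Matrix.fromBlocks_neg, Matrix.fromBlocks_add]

lemma lie_blocks (A B C D A' B' C' D' : Matrix (Fin N) (Fin N) ℝ) :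
    ⁅Matrix.fromBlocks A B C D, Matrix.fromBlocks A' B' C' D'⁆ =
      Matrix.fromBlocks (A*A' + B*C' - (A'*A + B'*C)) (A*B' + B*D' - (A'*B + B'*D))
        (C*A' + D*C' - (C'*A + D'*C)) (C*B' + D*D' - (C'*B + D'*D)) := by
  rw [Ring.lie_def, Matrix.fromBlocks_multiply, Matrix.fromBlocks_multiply, fromBlocks_sub']

lemma lie_Wii_Wij {i j : Fin N} (h : i ≠ j) (he : eps i j = 1) :
    ⁅Wmat N i i, Wmat N i j⁆ = (2 : ℝ) • Vmat N i j := by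
  rw [Wmat_eq, Wmat_eq, lie_blocks, Vmat, Matrix.fromBlocks_smul]
  refine Matrix.fromBlocks_inj.2 ⟨?_, by simp, by simp, ?_⟩ <;>
    simp only [S, Am, he, eps_self, one_smul, neg_smul, mul_neg, add_mul, mul_add, mul_one,
      Matrix.transpose_add, Matrix.transpose_smul, E_transpose, E_mul_same, E_mul_ne h,
      E_mul_ne h.symm, smul_add, smul_neg, neg_add, smul_mul_assoc, mul_smul_comm, smul_zero,
      neg_neg, neg_zero, add_zero, zero_add, smul_smul, neg_mul, mul_zero, zero_mul]
  · module
  · module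
end Stmt7Aux

namespace Stmt7Aux

variable {N : ℕ}

lemma lie_Vik_Vkj {i k j : Fin N} (hik : i ≠ k) (hkj : k ≠ j) (hij : i ≠ j) :
    ⁅Vmat N i k, Vmat N k j⁆ = Vmat N i j := by
  rw [Vmat, Vmat, Vmat, lie_blocks]
  refine Matrix.fromBlocks_inj.2 ⟨?_, by simp, by simp, ?_⟩ <;>
    simp only [Am, Matrix.transpose_add, Matrix.transpose_smul, E_transpose,
      add_mul, mul_add, neg_mul, mul_neg, smul_mul_assoc, mul_smul_comm,
      E_mul_same, E_mul_ne hik, E_mul_ne hik.symm, E_mul_ne hkj, E_mul_ne hkj.symm,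
      E_mul_ne hij, E_mul_ne hij.symm, smul_zero, smul_add, smul_neg, smul_smul,
      neg_neg, neg_zero, add_zero, zero_add, mul_zero, zero_mul, neg_add] <;>
  · first
    | rw [show eps i k * eps k j = -eps i j from eps_trans]; module
    | rw [show eps k j * eps i k = -eps i j by rw [mul_comm]; exact eps_trans]; module

lemma lie_Vij_Wjj {i j : Fin N} (h : i ≠ j) :
    ⁅Vmat N i j, Wmat N j j⁆ = (2 : ℝ) • Wmat N i j := by
  rw [Vmat, Wmat_eq, Wmat_eq, lie_blocks, Matrix.fromBlocks_smul]
  refine Matrix.fromBlocks_inj.2 ⟨by simp, ?_, ?_, by simp⟩ <;>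
    simp only [S, Am, eps_self, Matrix.transpose_add, Matrix.transpose_smul, E_transpose,
      add_mul, mul_add, neg_mul, mul_neg, smul_mul_assoc, mul_smul_comm,
      E_mul_same, E_mul_ne h, E_mul_ne h.symm, smul_zero, smul_add, smul_neg, smul_smul,
      neg_neg, neg_zero, add_zero, zero_add, mul_zero, zero_mul, neg_add, neg_smul, one_smul] <;>
    module

end Stmt7Aux

namespace Stmt7Aux

variable {N : ℕ}

lemma Vmat_self (i : Fin N) : Vmat N i i = 0 := by
  have : Am i i = 0 := by
    rw [Am, eps_self, neg_smul, one_smul, add_neg_cancel]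
  rw [Vmat, this]
  ext (k|k) (l|l) <;> simp

lemma Vmat_swap (i j : Fin N) : Vmat N i j = eps i j • Vmat N j i := by
  rw [Vmat, Vmat, Matrix.fromBlocks_smul]
  have hAm : Am i j = eps i j • Am j i := by
    rw [Am, Am, smul_add, smul_smul, eps_comm i j, eps_mul_self j i, one_smul, add_comm]
  refine Matrix.fromBlocks_inj.2 ⟨hAm, by simp, by simp, ?_⟩
  rw [hAm, Matrix.transpose_smul, smul_neg]

lemma Wmat_swap (i j : Fin N) : Wmat N i j = Wmat N j i := by
  rw [Wmat_eq, Wmat_eq]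
  have hS : S i j = S j i := add_comm _ _
  rw [hS, eps_comm]

/-- φ : A ↦ [[A,0],[0,-Aᵀ]] -/
def phi (N : ℕ) : Matrix (Fin N) (Fin N) ℝ →ₗ[ℝ] Matrix (Fin N ⊕ Fin N) (Fin N ⊕ Fin N) ℝ where
  toFun A := Matrix.fromBlocks A 0 0 (-Aᵀ)
  map_add' A B := by
    rw [Matrix.transpose_add, neg_add, Matrix.fromBlocks_add, add_zero]
  map_smul' c A := by
    simp only [RingHom.id_apply, Matrix.fromBlocks_smul, Matrix.transpose_smul, smul_neg,
      smul_zero]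

/-- ψ : B ↦ [[0,B],[Bˢ,0]] -/
def psi (N : ℕ) : Matrix (Fin N) (Fin N) ℝ →ₗ[ℝ] Matrix (Fin N ⊕ Fin N) (Fin N ⊕ Fin N) ℝ where
  toFun B := Matrix.fromBlocks 0 B (sOp N B) 0
  map_add' A B := by
    have : sOp N (A + B) = sOp N A + sOp N B := by
      ext k l; simp [sOp]; ring
    
    rw [this, Matrix.fromBlocks_add, add_zero]
  map_smul' c A := by
    have : sOp N (c • A) = c • sOp N A := by
      ext k l; simp [sOp]; ring
    simp only [RingHom.id_apply, this, Matrix.fromBlocks_smul, smul_zero]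

lemma phi_Am (i j : Fin N) : phi N (Am i j) = Vmat N i j := rfl

lemma sOp_S (i j : Fin N) : sOp N (S i j) = eps i j • S i j := by
  ext k l
  simp only [sOp, Matrix.of_apply, S, E, Matrix.add_apply, Matrix.smul_apply,
    Matrix.single, smul_eq_mul]
  have hekl : (-1 : ℝ) ^ (((k : ℕ) : ℤ) - ((l : ℕ) : ℤ) + 1) = eps k l := rfl
  rw [hekl]
  by_cases hik : i = k <;> by_cases hjl : j = l <;> by_cases hjk : j = k <;>
    by_cases hil : i = l <;> subst_vars <;>
    simp_all [eps_comm] <;> ring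

lemma psi_S (i j : Fin N) : psi N (S i j) = Wmat N i j := by
  rw [Wmat_eq]
  show Matrix.fromBlocks 0 (S i j) (sOp N (S i j)) 0 = _
  rw [sOp_S]

end Stmt7Aux

namespace Stmt7Aux

variable {N : ℕ}

lemma A_expand {A : Matrix (Fin N) (Fin N) ℝ} (hA : sOp N A = A) :
    A = ∑ i : Fin N, ∑ j : Fin N, (A i j / 2) • Am i j := by
  ext k l
  have hkl := congrFun (congrFun hA k) l
  have hekl : (-1 : ℝ) ^ (((k : ℕ) : ℤ) - ((l : ℕ) : ℤ) + 1) = eps k l := rfl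
  simp only [sOp, Matrix.of_apply, hekl] at hkl
  simp only [Matrix.sum_apply, Matrix.smul_apply, Am, Matrix.add_apply, E,
    Matrix.single, Matrix.of_apply, Matrix.smul_apply, smul_eq_mul, ite_and,
    mul_add, mul_ite, mul_zero, mul_one, Finset.sum_add_distrib,
    Finset.sum_ite_eq, Finset.sum_ite_eq', Finset.mem_univ, if_true]
  rw [Finset.sum_comm]
  simp only [Finset.sum_ite_eq', Finset.mem_univ, if_true]
  rw [← hkl, eps_comm]
  ring

lemma B_expand {B : Matrix (Fin N) (Fin N) ℝ} (hB : Bᵀ = B) :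
    B = ∑ i : Fin N, ∑ j : Fin N, (B i j / 2) • S i j := by
  ext k l
  have hkl := congrFun (congrFun hB k) l
  simp only [Matrix.transpose_apply] at hkl
  simp only [Matrix.sum_apply, Matrix.smul_apply, S, Matrix.add_apply, E,
    Matrix.single, Matrix.of_apply, smul_eq_mul, ite_and,
    mul_add, mul_ite, mul_zero, mul_one, Finset.sum_add_distrib,
    Finset.sum_ite_eq, Finset.sum_ite_eq', Finset.mem_univ, if_true]
  rw [Finset.sum_comm]
  simp only [Finset.sum_ite_eq', Finset.mem_univ, if_true]
  rw [← hkl]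
  ring

end Stmt7Aux


open Stmt7Aux

/-- if a Lie subalgebra `g ⊆ spo_N(ℝ)` contains all the `W_{ii}` and all the
`W_{i,i+1}`, then `g = spo_N(ℝ)`. -/
theorem stmt7 (N : ℕ) (hN : 1 ≤ N)
    (g : LieSubalgebra ℝ (Matrix (Fin N ⊕ Fin N) (Fin N ⊕ Fin N) ℝ))
    (hsub : (g : Set (Matrix (Fin N ⊕ Fin N) (Fin N ⊕ Fin N) ℝ)) ⊆ spoSet N)
    (hWii : ∀ i : Fin N, Wmat N i i ∈ g)
    (hWsucc : ∀ i j : Fin N, (j : ℕ) = (i : ℕ) + 1 → Wmat N i j ∈ g) :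
    (g : Set (Matrix (Fin N ⊕ Fin N) (Fin N ⊕ Fin N) ℝ)) = spoSet N := by
  -- step 1 : V_{i,i+1}
  have hV1 : ∀ i j : Fin N, (j : ℕ) = (i : ℕ) + 1 → Vmat N i j ∈ g := by
    intro i j hj
    have hne : i ≠ j := Fin.ne_of_val_ne (by omega)
    have h := g.lie_mem (hWii i) (hWsucc i j hj)
    rw [lie_Wii_Wij hne (eps_succ hj)] at h
    have h2 := g.smul_mem (2⁻¹ : ℝ) h
    rw [smul_smul] at h2
    norm_num at h2
    exact h2
  -- step 2 : V_{ij}, i < j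
  have hVd : ∀ d : ℕ, ∀ i j : Fin N, (j : ℕ) = (i : ℕ) + d + 1 → Vmat N i j ∈ g := by
    intro d
    induction d with
    | zero => intro i j h; exact hV1 i j (by omega)
    | succ d ih =>
      intro i j h
      have hkN : (i : ℕ) + d + 1 < N := by have := j.isLt; omega
      set k : Fin N := ⟨(i : ℕ) + d + 1, hkN⟩ with hk
      have h1 : Vmat N i k ∈ g := ih i k rfl
      have h2 : Vmat N k j ∈ g := hV1 k j (by simp [hk]; omega)
      have hik : i ≠ k := Fin.ne_of_val_ne (by simp [hk]; omega)
      have hkj : k ≠ j := Fin.ne_of_val_ne (by simp [hk]; omega)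
      have hij : i ≠ j := Fin.ne_of_val_ne (by omega)
      have h3 := g.lie_mem h1 h2
      rwa [lie_Vik_Vkj hik hkj hij] at h3
  -- step 3 : all V
  have hVall : ∀ i j : Fin N, Vmat N i j ∈ g := by
    have hlt : ∀ i j : Fin N, (i : ℕ) < (j : ℕ) → Vmat N i j ∈ g := by
      intro i j h
      exact hVd ((j : ℕ) - (i : ℕ) - 1) i j (by omega)
    intro i j
    rcases Nat.lt_trichotomy (i : ℕ) (j : ℕ) with h | h | h
    · exact hlt i j h
    · have : i = j := Fin.ext h
      subst this
      rw [Vmat_self]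
      exact g.zero_mem
    · rw [Vmat_swap]
      exact g.smul_mem _ (hlt j i h)
  -- step 4 : all W
  have hWall : ∀ i j : Fin N, Wmat N i j ∈ g := by
    intro i j
    by_cases h : i = j
    · subst h; exact hWii i
    · have h1 := g.lie_mem (hVall i j) (hWii j)
      rw [lie_Vij_Wjj h] at h1
      have h2 := g.smul_mem (2⁻¹ : ℝ) h1
      rw [smul_smul] at h2
      norm_num at h2
      exact h2
  -- spanning
  refine Set.Subset.antisymm hsub ?_
  rintro X ⟨A, B, hA, hB, rfl⟩
  have hdecomp : Matrix.fromBlocks A B (sOp N B) (-Aᵀ) = phi N A + psi N B := by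
    show _ = Matrix.fromBlocks A 0 0 (-Aᵀ) + Matrix.fromBlocks 0 B (sOp N B) 0
    rw [Matrix.fromBlocks_add, add_zero, add_zero, zero_add, zero_add]
  have hphi : phi N A = ∑ i : Fin N, ∑ j : Fin N, (A i j / 2) • Vmat N i j := by
    conv_lhs => rw [A_expand hA]
    simp only [map_sum, LinearMap.map_smul, phi_Am]
  have hpsi : psi N B = ∑ i : Fin N, ∑ j : Fin N, (B i j / 2) • Wmat N i j := by
    conv_lhs => rw [B_expand hB]
    simp only [map_sum, LinearMap.map_smul, psi_S]
  show Matrix.fromBlocks A B (sOp N B) (-Aᵀ) ∈ g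
  rw [hdecomp, hphi, hpsi]
  refine g.add_mem ?_ ?_ <;>
    exact sum_mem fun i _ => sum_mem fun j _ => g.smul_mem _ (by
      first
      | exact hVall i j
      | exact hWall i j)


end
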